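/- Fix n ≥ 1, b_M > 0, T > 0, α ≥ 0 and β* ∈ ℝ^p. Let x_1,…,x_n ∈ ℝ^p, ε_1,…,ε_n ∈ ℝ, and set y_i = x_iᵀβ* + ε_i. Let w : ℝ^p → [0,1] satisfy ‖w(x)x‖₂ ≤ b_M for all x ∈ ℝ^p, and let ℓ : ℝ → ℝ be convex and differentiable with ℓ(a) − ℓ(b) − ℓ′(b)(a − b) ≥ α(a − b)² for all a, b ∈ [−T, T]. Define the robust empirical loss L_n(β) = (1/n)∑_{i=1}^n w(x_i)·ℓ(w(x_i)(y_i − x_iᵀβ)). Then for every β ∈ ℝ^p with ‖β − β*‖₂ ≤ T/(2b_M), the Taylor remainder satisfies L_n(β) − L_n(β*) − ∇L_n(β*)ᵀ(β − β*) ≥ (α/n)·∑_{i=1}^n w(x_i)³·(x_iᵀ(β − β*))²·1{|ε_i| ≤ T/2}. -/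

import Mathlib

open scoped RealInnerProductSpace

/-- The robust empirical loss `L_n(β) = (1/n) ∑ᵢ w(xᵢ) ℓ(w(xᵢ)(yᵢ - xᵢᵀβ))`. -/
noncomputable def robustLoss {p : ℕ} (n : ℕ) (w : EuclideanSpace ℝ (Fin p) → ℝ)
    (ℓ : ℝ → ℝ) (x : Fin n → EuclideanSpace ℝ (Fin p)) (y : Fin n → ℝ)
    (β : EuclideanSpace ℝ (Fin p)) : ℝ :=
  (n : ℝ)⁻¹ * ∑ i, w (x i) * ℓ (w (x i) * (y i - ⟪x i, β⟫))

/-- Tangent line inequality for a convex differentiable function. -/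
lemma tangent_line_le' {f : ℝ → ℝ} (hc : ConvexOn ℝ Set.univ f) {b : ℝ}
    (hd : DifferentiableAt ℝ f b) (a : ℝ) :
    f b + deriv f b * (a - b) ≤ f a := by
  rcases lt_trichotomy a b with h | rfl | h
  · have hs := hc.slope_le_deriv (Set.mem_univ a) (Set.mem_univ b) h hd
    rw [slope_def_field] at hs
    have hba : 0 < b - a := by linarith
    have := (div_le_iff₀ hba).mp hs
    nlinarith
  · simp
  · have hs := hc.deriv_le_slope (Set.mem_univ b) (Set.mem_univ a) h hd
    rw [slope_def_field] at hs
    have hab : 0 < a - b := by linarith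
    have := (le_div_iff₀ hab).mp hs
    nlinarith

theorem robustLoss_taylor_remainder_lower_bound {p : ℕ} (n : ℕ) (hn : 1 ≤ n)
    (bM T α : ℝ) (hbM : 0 < bM) (hT : 0 < T) (hα : 0 ≤ α)
    (βs : EuclideanSpace ℝ (Fin p))
    (x : Fin n → EuclideanSpace ℝ (Fin p)) (ε : Fin n → ℝ)
    (y : Fin n → ℝ) (hy : ∀ i, y i = ⟪x i, βs⟫ + ε i)
    (w : EuclideanSpace ℝ (Fin p) → ℝ)
    (hw01 : ∀ v, 0 ≤ w v ∧ w v ≤ 1)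
    (hwb : ∀ v, ‖w v • v‖ ≤ bM)
    (ℓ : ℝ → ℝ)
    (hℓ_conv : ConvexOn ℝ Set.univ ℓ)
    (hℓ_diff : ∀ u, DifferentiableAt ℝ ℓ u)
    (hℓ_curv : ∀ a b : ℝ, a ∈ Set.Icc (-T) T → b ∈ Set.Icc (-T) T →
      α * (a - b) ^ 2 ≤ ℓ a - ℓ b - deriv ℓ b * (a - b)) :
    ∀ β : EuclideanSpace ℝ (Fin p), ‖β - βs‖ ≤ T / (2 * bM) →
      robustLoss n w ℓ x y β - robustLoss n w ℓ x y βs -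
          ⟪gradient (robustLoss n w ℓ x y) βs, β - βs⟫ ≥
        (α / n) * ∑ i, w (x i) ^ 3 * ⟪x i, β - βs⟫ ^ 2 *
          (if |ε i| ≤ T / 2 then (1 : ℝ) else 0) := by
  intro β hβ
  -- the derivative of each term
  have hterm : ∀ i : Fin n, HasFDerivAt
      (fun β : EuclideanSpace ℝ (Fin p) => w (x i) * ℓ (w (x i) * (y i - ⟪x i, β⟫)))
      ((w (x i) * w (x i) * deriv ℓ (w (x i) * (y i - ⟪x i, βs⟫))) • (-(innerSL ℝ (x i)))) βs := by
    intro i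
    have h1 : HasFDerivAt (fun β : EuclideanSpace ℝ (Fin p) => y i - ⟪x i, β⟫)
        (-(innerSL ℝ (x i))) βs := ((innerSL ℝ (x i)).hasFDerivAt).const_sub (y i)
    have h2 := h1.const_mul (w (x i))
    have h3 := ((hℓ_diff (w (x i) * (y i - ⟪x i, βs⟫))).hasDerivAt).comp_hasFDerivAt βs h2
    have h4 := h3.const_mul (w (x i))
    refine h4.congr_fderiv ?_
    ext v
    simp [mul_comm, mul_assoc, mul_left_comm]
  have hL : HasFDerivAt (robustLoss n w ℓ x y)
      ((n:ℝ)⁻¹ • ∑ i, (w (x i) * w (x i) * deriv ℓ (w (x i) * (y i - ⟪x i, βs⟫))) •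
        (-(innerSL ℝ (x i)))) βs := by
    have hs := HasFDerivAt.sum (fun i (_ : i ∈ Finset.univ) => hterm i)
    have h := hs.const_mul ((n:ℝ)⁻¹)
    refine h.congr_of_eventuallyEq (Filter.Eventually.of_forall fun b => ?_)
    simp only [robustLoss, Finset.sum_apply]
  have hgrad : ⟪gradient (robustLoss n w ℓ x y) βs, β - βs⟫ =
      (n:ℝ)⁻¹ * ∑ i, (w (x i) * w (x i) * deriv ℓ (w (x i) * (y i - ⟪x i, βs⟫))) *
        (-⟪x i, β - βs⟫) := by
    rw [gradient, InnerProductSpace.toDual_symm_apply, hL.fderiv]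
    simp [Finset.mul_sum]
  -- per-term inequality
  have key : ∀ i : Fin n,
      α * (w (x i) ^ 3 * ⟪x i, β - βs⟫ ^ 2 * (if |ε i| ≤ T / 2 then (1:ℝ) else 0)) ≤
      w (x i) * ℓ (w (x i) * (y i - ⟪x i, β⟫)) - w (x i) * ℓ (w (x i) * (y i - ⟪x i, βs⟫)) -
        (w (x i) * w (x i) * deriv ℓ (w (x i) * (y i - ⟪x i, βs⟫))) * (-⟪x i, β - βs⟫) := by
    intro i
    obtain ⟨hw0, hw1⟩ := hw01 (x i)
    set wi := w (x i) with hwi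
    set t : ℝ := ⟪x i, β - βs⟫ with hti
    have hyb : y i - ⟪x i, βs⟫ = ε i := by rw [hy i]; ring
    have hya : y i - ⟪x i, β⟫ = ε i - t := by
      have : (⟪x i, β - βs⟫ : ℝ) = ⟪x i, β⟫ - ⟪x i, βs⟫ := inner_sub_right _ _ _
      rw [hy i, hti, this]; ring
    rw [hyb, hya]
    have hwt : |wi * t| ≤ T / 2 := by
      have h1 : wi * t = ⟪(w (x i)) • (x i), β - βs⟫ := (real_inner_smul_left _ _ _).symm
      rw [h1]
      calc |(⟪(w (x i)) • (x i), β - βs⟫ : ℝ)|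
          ≤ ‖(w (x i)) • (x i)‖ * ‖β - βs‖ := abs_real_inner_le_norm _ _
        _ ≤ bM * (T / (2 * bM)) :=
            mul_le_mul (hwb _) hβ (norm_nonneg _) hbM.le
        _ = T / 2 := by field_simp
    by_cases hcase : |ε i| ≤ T / 2
    · -- curvature case
      have hw1' : |wi| ≤ 1 := abs_le.mpr ⟨by linarith, hw1⟩
      have hbe : |wi * ε i| ≤ T / 2 := by
        rw [abs_mul]
        calc |wi| * |ε i| ≤ 1 * (T / 2) :=
              mul_le_mul hw1' hcase (abs_nonneg _) zero_le_one
          _ = T / 2 := one_mul _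
      have hbe' := abs_le.mp hbe
      have hwt' := abs_le.mp hwt
      have hb : wi * ε i ∈ Set.Icc (-T) T := by
        constructor <;> linarith [hbe'.1, hbe'.2]
      have ha : wi * (ε i - t) ∈ Set.Icc (-T) T := by
        have heq : wi * (ε i - t) = wi * ε i - wi * t := by ring
        constructor <;> (rw [heq]; linarith [hbe'.1, hbe'.2, hwt'.1, hwt'.2])
      have hcurv := hℓ_curv (wi * (ε i - t)) (wi * ε i) ha hb
      have h2 := mul_le_mul_of_nonneg_left hcurv hw0
      simp only [if_pos hcase, mul_one]
      calc α * (wi ^ 3 * t ^ 2)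
          = wi * (α * (wi * (ε i - t) - wi * ε i) ^ 2) := by ring
        _ ≤ wi * (ℓ (wi * (ε i - t)) - ℓ (wi * ε i) -
              deriv ℓ (wi * ε i) * (wi * (ε i - t) - wi * ε i)) := h2
        _ = wi * ℓ (wi * (ε i - t)) - wi * ℓ (wi * ε i) -
              (wi * wi * deriv ℓ (wi * ε i)) * (-t) := by ring
    · -- convexity case
      have htan := tangent_line_le' hℓ_conv (hℓ_diff (wi * ε i)) (wi * (ε i - t))
      have h2 : 0 ≤ ℓ (wi * (ε i - t)) - ℓ (wi * ε i) -
          deriv ℓ (wi * ε i) * (wi * (ε i - t) - wi * ε i) := by linarith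
      simp only [if_neg hcase, mul_zero]
      calc (0:ℝ)
          ≤ wi * (ℓ (wi * (ε i - t)) - ℓ (wi * ε i) -
              deriv ℓ (wi * ε i) * (wi * (ε i - t) - wi * ε i)) := mul_nonneg hw0 h2
        _ = wi * ℓ (wi * (ε i - t)) - wi * ℓ (wi * ε i) -
              (wi * wi * deriv ℓ (wi * ε i)) * (-t) := by ring
  -- assemble
  rw [ge_iff_le, robustLoss, robustLoss, hgrad]
  have hn0 : (0:ℝ) ≤ (n:ℝ)⁻¹ := by positivity
  calc (α / n) * ∑ i, w (x i) ^ 3 * ⟪x i, β - βs⟫ ^ 2 * (if |ε i| ≤ T / 2 then (1:ℝ) else 0)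
      = (n:ℝ)⁻¹ * ∑ i, α * (w (x i) ^ 3 * ⟪x i, β - βs⟫ ^ 2 *
          (if |ε i| ≤ T / 2 then (1:ℝ) else 0)) := by
        rw [Finset.mul_sum, Finset.mul_sum]
        exact Finset.sum_congr rfl fun i _ => by ring
    _ ≤ (n:ℝ)⁻¹ * ∑ i, (w (x i) * ℓ (w (x i) * (y i - ⟪x i, β⟫)) -
          w (x i) * ℓ (w (x i) * (y i - ⟪x i, βs⟫)) -
          (w (x i) * w (x i) * deriv ℓ (w (x i) * (y i - ⟪x i, βs⟫))) * (-⟪x i, β - βs⟫)) :=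
        mul_le_mul_of_nonneg_left (Finset.sum_le_sum fun i _ => key i) hn0
    _ = (n:ℝ)⁻¹ * ∑ i, w (x i) * ℓ (w (x i) * (y i - ⟪x i, β⟫)) -
          (n:ℝ)⁻¹ * ∑ i, w (x i) * ℓ (w (x i) * (y i - ⟪x i, βs⟫)) -
          (n:ℝ)⁻¹ * ∑ i, (w (x i) * w (x i) * deriv ℓ (w (x i) * (y i - ⟪x i, βs⟫))) *
            (-⟪x i, β - βs⟫) := by
        rw [Finset.sum_sub_distrib, Finset.sum_sub_distrib]; ring
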